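/- Let f : M → M′ be a Raney morphism between MT-algebras, and define f̂ : M → M′ by f̂(a) = ⨆{ f(x) | x locally closed in M, x ≤ a }. Then f̂ is a proximity morphism. -/

import Mathlib

/-- An interior operator on a complete Boolean algebra (Kuratowski axioms). -/
structure MTInterior {M : Type*} [CompleteBooleanAlgebra M] (box : M → M) : Prop where
  map_top : box ⊤ = ⊤
  map_inf : ∀ a b : M, box (a ⊓ b) = box a ⊓ box b
  le_self : ∀ a : M, box a ≤ a
  le_box_box : ∀ a : M, box a ≤ box (box a)

/-- An element is open if it is a fixpoint of the interior operator. -/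
def MTOpen {M : Type*} [CompleteBooleanAlgebra M] (box : M → M) (a : M) : Prop :=
  box a = a

/-- An element is closed if its complement is open. -/
def MTClosed {M : Type*} [CompleteBooleanAlgebra M] (box : M → M) (a : M) : Prop :=
  MTOpen box aᶜ

/-- An element is saturated if it is an infimum of a set of open elements. -/
def MTSat {M : Type*} [CompleteBooleanAlgebra M] (box : M → M) (a : M) : Prop :=
  ∃ S : Set M, (∀ s ∈ S, MTOpen box s) ∧ a = sInf S

/-- An element is locally closed if it is the meet of an open and a closed element. -/
def MTLocClosed {M : Type*} [CompleteBooleanAlgebra M] (box : M → M) (a : M) : Prop :=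
  ∃ u c, MTOpen box u ∧ MTClosed box c ∧ a = u ⊓ c

/-- Membership in the Boolean subalgebra `𝓑𝓢M` generated by the saturated elements. -/
inductive MTBS {M : Type*} [CompleteBooleanAlgebra M] (box : M → M) : M → Prop
  | sat (a : M) : MTSat box a → MTBS box a
  | bot : MTBS box ⊥
  | top : MTBS box ⊤
  | inf (a b : M) : MTBS box a → MTBS box b → MTBS box (a ⊓ b)
  | sup (a b : M) : MTBS box a → MTBS box b → MTBS box (a ⊔ b)
  | compl (a : M) : MTBS box a → MTBS box aᶜ

/-- An MT-algebra is a `T₀`-algebra if every element is a supremum of elements of the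
form `s ⊓ c` with `s` saturated and `c` closed. -/
def MTT0 {M : Type*} [CompleteBooleanAlgebra M] (box : M → M) : Prop :=
  ∀ a : M, a = sSup {b | (∃ s c, MTSat box s ∧ MTClosed box c ∧ b = s ⊓ c) ∧ b ≤ a}

/-- A Raney morphism between MT-algebras. -/
structure MTRaneyHom {M M' : Type*} [CompleteBooleanAlgebra M] [CompleteBooleanAlgebra M']
    (box : M → M) (box' : M' → M') (f : M → M') : Prop where
  sat_map : ∀ a : M, MTSat box a → MTSat box' (f a)
  sat_sup : ∀ a b : M, MTSat box a → MTSat box b → f (a ⊔ b) = f a ⊔ f b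
  map_bot : f ⊥ = ⊥
  sat_sInf : ∀ S : Set M, (∀ s ∈ S, MTSat box s) → f (sInf S) = sInf (f '' S)
  open_map : ∀ a : M, MTOpen box a → MTOpen box' (f a)
  map_top : f ⊤ = ⊤
  open_sSup : ∀ S : Set M, (∀ s ∈ S, MTOpen box s) → f (sSup S) = sSup (f '' S)
  map_inf : ∀ a b : M, f (a ⊓ b) = f a ⊓ f b
  bs_sup : ∀ x y : M, MTBS box x → MTBS box y → f (x ⊔ y) = f x ⊔ f y
  approx : ∀ a : M, f a = sSup (f '' {x | MTBS box x ∧ x ≤ a})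

/-- A proximity morphism between MT-algebras. -/
structure MTProxHom {M M' : Type*} [CompleteBooleanAlgebra M] [CompleteBooleanAlgebra M']
    (box : M → M) (box' : M' → M') (h : M → M') : Prop where
  open_map : ∀ a : M, MTOpen box a → MTOpen box' (h a)
  map_top : h ⊤ = ⊤
  open_inf : ∀ u v : M, MTOpen box u → MTOpen box v → h (u ⊓ v) = h u ⊓ h v
  open_sSup : ∀ S : Set M, (∀ s ∈ S, MTOpen box s) → h (sSup S) = sSup (h '' S)
  map_inf : ∀ a b : M, h (a ⊓ b) = h a ⊓ h b
  lc_finsup : ∀ S : Set M, S.Finite → (∀ x ∈ S, MTLocClosed box x) →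
    h (sSup S) = sSup (h '' S)
  approx : ∀ a : M, h a = sSup (h '' {x | MTLocClosed box x ∧ x ≤ a})

/-- The map `f̂` associated to a Raney morphism `f`. -/
def mtHat {M M' : Type*} [CompleteBooleanAlgebra M] [CompleteBooleanAlgebra M']
    (box : M → M) (f : M → M') (a : M) : M' :=
  sSup (f '' {x | MTLocClosed box x ∧ x ≤ a})

section Aux

variable {M M' : Type*} [CompleteBooleanAlgebra M] [CompleteBooleanAlgebra M']
variable {box : M → M} {box' : M' → M'} {f : M → M'}

lemma mt_box_mono (hbox : MTInterior box) {a b : M} (h : a ≤ b) : box a ≤ box b := by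
  have h2 := hbox.map_inf a b
  rw [inf_eq_left.mpr h] at h2
  rw [h2]; exact inf_le_right

lemma mt_open_bot (hbox : MTInterior box) : MTOpen box (⊥ : M) :=
  le_antisymm (hbox.le_self ⊥) bot_le

lemma mt_open_top (hbox : MTInterior box) : MTOpen box (⊤ : M) := hbox.map_top

lemma mt_closed_top (hbox : MTInterior box) : MTClosed box (⊤ : M) := by
  unfold MTClosed; rw [compl_top]; exact mt_open_bot hbox

lemma mt_open_inf (hbox : MTInterior box) {a b : M} (ha : MTOpen box a) (hb : MTOpen box b) :
    MTOpen box (a ⊓ b) := by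
  unfold MTOpen at *; rw [hbox.map_inf, ha, hb]

lemma mt_open_sSup (hbox : MTInterior box) {S : Set M} (h : ∀ s ∈ S, MTOpen box s) :
    MTOpen box (sSup S) := by
  refine le_antisymm (hbox.le_self _) (sSup_le fun s hs => ?_)
  rw [← h s hs]; exact mt_box_mono hbox (le_sSup hs)

lemma mt_open_sup (hbox : MTInterior box) {a b : M} (ha : MTOpen box a) (hb : MTOpen box b) :
    MTOpen box (a ⊔ b) := by
  have := mt_open_sSup hbox (S := {a, b}) (by rintro s (rfl | rfl) <;> assumption)
  rwa [sSup_pair] at this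

lemma mt_closed_inf (hbox : MTInterior box) {a b : M} (ha : MTClosed box a)
    (hb : MTClosed box b) : MTClosed box (a ⊓ b) := by
  unfold MTClosed at *
  rw [compl_inf]
  exact mt_open_sup hbox ha hb

lemma mt_lc_of_open (hbox : MTInterior box) {u : M} (hu : MTOpen box u) :
    MTLocClosed box u :=
  ⟨u, ⊤, hu, mt_closed_top hbox, (inf_top_eq u).symm⟩

lemma mt_lc_bot (hbox : MTInterior box) : MTLocClosed box (⊥ : M) :=
  mt_lc_of_open hbox (mt_open_bot hbox)

lemma mt_lc_inf (hbox : MTInterior box) {a b : M} (ha : MTLocClosed box a)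
    (hb : MTLocClosed box b) : MTLocClosed box (a ⊓ b) := by
  obtain ⟨u, c, hu, hc, rfl⟩ := ha
  obtain ⟨v, d, hv, hd, rfl⟩ := hb
  exact ⟨u ⊓ v, c ⊓ d, mt_open_inf hbox hu hv, mt_closed_inf hbox hc hd,
    inf_inf_inf_comm u c v d⟩

lemma mt_sat_of_open {u : M} (hu : MTOpen box u) : MTSat box u :=
  ⟨{u}, by simpa using hu, (sInf_singleton).symm⟩

lemma mt_bs_of_lc {a : M} (ha : MTLocClosed box a) : MTBS box a := by
  obtain ⟨u, c, hu, hc, rfl⟩ := ha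
  refine MTBS.inf _ _ (MTBS.sat _ (mt_sat_of_open hu)) ?_
  have := MTBS.compl _ (MTBS.sat _ (mt_sat_of_open hc))
  rwa [compl_compl] at this

lemma mt_f_mono (hf : MTRaneyHom box box' f) {a b : M} (h : a ≤ b) : f a ≤ f b := by
  have h2 := hf.map_inf a b
  rw [inf_eq_left.mpr h] at h2
  rw [h2]; exact inf_le_right

lemma mt_hat_eq_on_lc (hf : MTRaneyHom box box' f) {x : M} (hx : MTLocClosed box x) :
    mtHat box f x = f x := by
  refine le_antisymm (sSup_le ?_) (le_sSup ⟨x, ⟨hx, le_rfl⟩, rfl⟩)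
  rintro _ ⟨y, ⟨-, hy⟩, rfl⟩
  exact mt_f_mono hf hy

lemma mt_hat_mono {a b : M} (h : a ≤ b) : mtHat box f a ≤ mtHat box f b := by
  refine sSup_le ?_
  rintro _ ⟨y, ⟨hy, hy'⟩, rfl⟩
  exact le_sSup ⟨y, ⟨hy, hy'.trans h⟩, rfl⟩

lemma mt_f_le_hat (hf : MTRaneyHom box box' f) {x a : M} (hx : MTLocClosed box x)
    (hxa : x ≤ a) : f x ≤ mtHat box f a :=
  le_sSup ⟨x, ⟨hx, hxa⟩, rfl⟩

lemma mt_bs_finsup (hf : MTRaneyHom box box' f) {S : Set M} (hS : S.Finite)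
    (h : ∀ x ∈ S, MTBS box x) :
    MTBS box (sSup S) ∧ f (sSup S) = sSup (f '' S) := by
  refine Set.Finite.induction_on
    (motive := fun S _ => (∀ x ∈ S, MTBS box x) →
      MTBS box (sSup S) ∧ f (sSup S) = sSup (f '' S)) S hS ?_ ?_ h
  · intro _
    simpa using ⟨MTBS.bot, hf.map_bot⟩
  · rintro a T - - ih h
    obtain ⟨ih1, ih2⟩ := ih fun x hx => h x (Set.mem_insert_of_mem a hx)
    have ha := h a (Set.mem_insert a T)
    constructor
    · rw [sSup_insert]
      exact MTBS.sup _ _ ha ih1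
    · rw [sSup_insert, hf.bs_sup _ _ ha ih1, ih2, Set.image_insert_eq, sSup_insert]

end Aux

/-- if `f` is a Raney morphism then `f̂` is a proximity morphism. -/
theorem stmt_12 {M M' : Type*} [CompleteBooleanAlgebra M] [CompleteBooleanAlgebra M']
    (box : M → M) (box' : M' → M') (hbox : MTInterior box) (hbox' : MTInterior box')
    (f : M → M') (hf : MTRaneyHom box box' f) :
    MTProxHom box box' (mtHat box f) := by
  have hat_open : ∀ u : M, MTOpen box u → mtHat box f u = f u := fun u hu =>
    mt_hat_eq_on_lc hf (mt_lc_of_open hbox hu)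
  constructor
  · -- open_map
    intro u hu
    rw [hat_open u hu]
    exact hf.open_map u hu
  · -- map_top
    rw [hat_open ⊤ (mt_open_top hbox), hf.map_top]
  · -- open_inf
    intro u v hu hv
    rw [hat_open _ (mt_open_inf hbox hu hv), hat_open u hu, hat_open v hv, hf.map_inf]
  · -- open_sSup
    intro S hS
    rw [hat_open _ (mt_open_sSup hbox hS), hf.open_sSup S hS]
    congr 1
    exact Set.image_congr (fun x hx => (hat_open x (hS x hx)).symm)
  · -- map_inf
    intro a b
    refine le_antisymm (le_inf (mt_hat_mono inf_le_left) (mt_hat_mono inf_le_right)) ?_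
    rw [mtHat, sSup_inf_eq]
    refine iSup₂_le ?_
    rintro _ ⟨x, ⟨hx, hxa⟩, rfl⟩
    rw [inf_comm, mtHat, sSup_inf_eq]
    refine iSup₂_le ?_
    rintro _ ⟨y, ⟨hy, hyb⟩, rfl⟩
    rw [inf_comm, ← hf.map_inf]
    exact mt_f_le_hat hf (mt_lc_inf hbox hx hy) (inf_le_inf hxa hyb)
  · -- lc_finsup
    intro S hSfin hS
    refine le_antisymm (sSup_le ?_) (sSup_le ?_)
    · rintro _ ⟨z, ⟨hz, hzS⟩, rfl⟩
      -- z locally closed, z ≤ sSup S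
      set T : Set M := (fun s => z ⊓ s) '' S with hT
      have hTfin : T.Finite := hSfin.image _
      have hTbs : ∀ x ∈ T, MTBS box x := by
        rintro _ ⟨s, hs, rfl⟩
        exact mt_bs_of_lc (mt_lc_inf hbox hz (hS s hs))
      have hTsup : sSup T = z := by
        rw [hT, sSup_image]
        rw [← inf_sSup_eq, inf_eq_left.mpr hzS]
      have := (mt_bs_finsup hf hTfin hTbs).2
      rw [hTsup] at this
      rw [this]
      refine sSup_le ?_
      rintro _ ⟨_, ⟨s, hs, rfl⟩, rfl⟩
      calc f (z ⊓ s) ≤ mtHat box f s :=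
            mt_f_le_hat hf (mt_lc_inf hbox hz (hS s hs)) inf_le_right
        _ ≤ sSup (mtHat box f '' S) := le_sSup ⟨s, hs, rfl⟩
    · rintro _ ⟨s, hs, rfl⟩
      exact mt_hat_mono (le_sSup hs)
  · -- approx
    intro a
    rw [mtHat]
    congr 1
    refine Set.image_congr (fun x hx => ?_)
    exact (mt_hat_eq_on_lc hf hx.1).symm
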